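/- Let a, b be positive reals and φ, ψ complex numbers with |φ| = |ψ| = 1. Define the 2×2 complex matrices A₁ = (a/√2)·!![φ,0; ψ,0], A₂ = (a/√2)·!![0,ψ; 0,φ], A₃ = (a/√2)·!![0,−ψ; 0,φ], A₄ = (a/√2)·!![φ,0; −ψ,0], B₁ = (b/√2)·!![0,−conj(ψ); 0,conj(φ)], B₂ = (b/√2)·!![conj(φ),0; −conj(ψ),0], B₃ = (b/√2)·!![conj(φ),0; conj(ψ),0], B₄ = (b/√2)·!![0,conj(ψ); 0,conj(φ)]. If for every k ∈ ℝ³ the matrix Σ_{i=1}^{4} (exp(i (hᵢ·k)) • Aᵢ + exp(−i (hᵢ·k)) • Bᵢ) is unitary, then a = 1/2, b = 1/2, φ² + conj(φ)² = 0 and ψ² + conj(ψ)² = 0. -/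

import Mathlib

open Matrix Complex

/-- BCC generators `h₁ = (1,1,1)`, `h₂ = (1,−1,−1)`, `h₃ = (−1,1,−1)`, `h₄ = (−1,−1,1)`. -/
def bccH : Fin 4 → Fin 3 → ℝ :=
  ![![1, 1, 1], ![1, -1, -1], ![-1, 1, -1], ![-1, -1, 1]]

/-- The isotropy-covariant ansatz for the forward transition matrices:
`A₁ = (a/√2)!![φ,0; ψ,0]`, `A₂ = (a/√2)!![0,ψ; 0,φ]`, `A₃ = (a/√2)!![0,−ψ; 0,φ]`,
`A₄ = (a/√2)!![φ,0; −ψ,0]`. -/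
noncomputable def ansatzA (a : ℝ) (φ ψ : ℂ) : Fin 4 → Matrix (Fin 2) (Fin 2) ℂ :=
  ![((a / Real.sqrt 2 : ℝ) : ℂ) • !![φ, 0; ψ, 0],
    ((a / Real.sqrt 2 : ℝ) : ℂ) • !![0, ψ; 0, φ],
    ((a / Real.sqrt 2 : ℝ) : ℂ) • !![0, -ψ; 0, φ],
    ((a / Real.sqrt 2 : ℝ) : ℂ) • !![φ, 0; -ψ, 0]]

/-- The isotropy-covariant ansatz for the backward transition matrices:
`B₁ = (b/√2)!![0,−ψ*; 0,φ*]`, `B₂ = (b/√2)!![φ*,0; −ψ*,0]`, `B₃ = (b/√2)!![φ*,0; ψ*,0]`,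
`B₄ = (b/√2)!![0,ψ*; 0,φ*]`. -/
noncomputable def ansatzB (b : ℝ) (φ ψ : ℂ) : Fin 4 → Matrix (Fin 2) (Fin 2) ℂ :=
  ![((b / Real.sqrt 2 : ℝ) : ℂ) • !![0, -(starRingEnd ℂ ψ); 0, starRingEnd ℂ φ],
    ((b / Real.sqrt 2 : ℝ) : ℂ) • !![starRingEnd ℂ φ, 0; -(starRingEnd ℂ ψ), 0],
    ((b / Real.sqrt 2 : ℝ) : ℂ) • !![starRingEnd ℂ φ, 0; starRingEnd ℂ ψ, 0],
    ((b / Real.sqrt 2 : ℝ) : ℂ) • !![0, starRingEnd ℂ ψ; 0, starRingEnd ℂ φ]]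

set_option maxHeartbeats 1600000 in
/-- If the symbol of the isotropy-covariant ansatz walk on the BCC lattice is unitary for
every `k ∈ ℝ³`, then `a = b = 1/2`, `φ² + φ*² = 0` and `ψ² + ψ*² = 0`. -/
theorem ansatz_unitary_conditions (a b : ℝ) (ha : 0 < a) (hb : 0 < b) (φ ψ : ℂ)
    (hφ : ‖φ‖ = 1) (hψ : ‖ψ‖ = 1)
    (hU : ∀ k : Fin 3 → ℝ,
      (∑ i : Fin 4,
        (Complex.exp (Complex.I * ((bccH i ⬝ᵥ k : ℝ) : ℂ)) • ansatzA a φ ψ i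
          + Complex.exp (-(Complex.I * ((bccH i ⬝ᵥ k : ℝ) : ℂ))) • ansatzB b φ ψ i))
        ∈ Matrix.unitaryGroup (Fin 2) ℂ) :
    a = 1 / 2 ∧ b = 1 / 2 ∧ φ ^ 2 + (starRingEnd ℂ φ) ^ 2 = 0
      ∧ ψ ^ 2 + (starRingEnd ℂ ψ) ^ 2 = 0 := by
  have hφu : φ * starRingEnd ℂ φ = 1 := by
    rw [Complex.mul_conj]; norm_cast; rw [Complex.normSq_eq_norm_sq, hφ]; norm_num
  have hψu : ψ * starRingEnd ℂ ψ = 1 := by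
    rw [Complex.mul_conj]; norm_cast; rw [Complex.normSq_eq_norm_sq, hψ]; norm_num
  have hI : Complex.I ^ 2 = -1 := Complex.I_sq
  have E1 : Complex.exp (Complex.I * ((Real.pi:ℂ) / 4 + (Real.pi:ℂ) / 4)) = Complex.I := by
    rw [show (Complex.I * ((Real.pi:ℂ) / 4 + (Real.pi:ℂ) / 4)) = ((Real.pi/2:ℝ):ℂ) * Complex.I by
      push_cast; ring, Complex.exp_mul_I]; push_cast; simp
  have E2 : Complex.exp (Complex.I * (-((Real.pi:ℂ) / 4) + -((Real.pi:ℂ) / 4))) = -Complex.I := by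
    rw [show (Complex.I * (-((Real.pi:ℂ) / 4) + -((Real.pi:ℂ) / 4)))
        = ((-(Real.pi/2):ℝ):ℂ) * Complex.I by push_cast; ring, Complex.exp_mul_I]
    push_cast; simp
  have E3 : Complex.exp (-(Complex.I * ((Real.pi:ℂ) / 4 + (Real.pi:ℂ) / 4))) = -Complex.I := by
    rw [show (-(Complex.I * ((Real.pi:ℂ) / 4 + (Real.pi:ℂ) / 4)))
        = ((-(Real.pi/2):ℝ):ℂ) * Complex.I by push_cast; ring, Complex.exp_mul_I]
    push_cast; simp
  have E4 : Complex.exp (-(Complex.I * (-((Real.pi:ℂ) / 4) + -((Real.pi:ℂ) / 4)))) = Complex.I := by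
    rw [show (-(Complex.I * (-((Real.pi:ℂ) / 4) + -((Real.pi:ℂ) / 4))))
        = ((Real.pi/2:ℝ):ℂ) * Complex.I by push_cast; ring, Complex.exp_mul_I]
    push_cast; simp
  have E5 : Complex.exp (Complex.I * ((Real.pi:ℂ) / 2)) = Complex.I := by
    rw [show (Complex.I * ((Real.pi:ℂ) / 2)) = ((Real.pi/2:ℝ):ℂ) * Complex.I by
      push_cast; ring, Complex.exp_mul_I]; push_cast; simp
  have E6 : Complex.exp (-(Complex.I * ((Real.pi:ℂ) / 2))) = -Complex.I := by
    rw [show (-(Complex.I * ((Real.pi:ℂ) / 2))) = ((-(Real.pi/2):ℝ):ℂ) * Complex.I by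
      push_cast; ring, Complex.exp_mul_I]; push_cast; simp
  have h0 := hU (fun _ => 0)
  have h1 := hU ![Real.pi/4, Real.pi/4, 0]
  have h3 := hU ![Real.pi/2, 0, 0]
  simp only [Fin.sum_univ_four, bccH, ansatzA, ansatzB, Matrix.cons_val_zero,
    Matrix.cons_val_one, Matrix.head_cons, Matrix.cons_val_two, Matrix.cons_val_three,
    Matrix.tail_cons, dotProduct, Fin.sum_univ_three] at h0 h1 h3
  norm_num at h0 h1 h3
  rw [E1, E2, E3, E4] at h1
  rw [E5, E6] at h3
  replace h0 := Matrix.mem_unitaryGroup_iff'.mp h0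
  replace h1 := Matrix.mem_unitaryGroup_iff'.mp h1
  replace h3 := Matrix.mem_unitaryGroup_iff'.mp h3
  have f00 := congrFun (congrFun h0 0) 0
  have e00 := congrFun (congrFun h1 0) 0
  have e01 := congrFun (congrFun h1 0) 1
  have g00 := congrFun (congrFun h3 0) 0
  simp only [Matrix.mul_apply, Fin.sum_univ_two, Matrix.one_apply, Matrix.conjTranspose_apply,
    Matrix.star_apply, Matrix.cons_val_zero, Matrix.cons_val_one, Matrix.head_cons,
    RCLike.star_def, map_add, _root_.map_mul, map_neg, Complex.conj_I,
    Complex.conj_ofReal, Complex.conj_conj] at f00 e00 e01 g00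
  norm_num at f00 e00 e01 g00
  set c : ℂ := (a:ℂ) / ((Real.sqrt 2 : ℝ):ℂ) with hc
  set d : ℂ := (b:ℂ) / ((Real.sqrt 2 : ℝ):ℂ) with hd
  have G1 : 4*d^2 + 4*c^2 = 1 := by
    linear_combination e00 - 4*d^2*hφu - 4*c^2*hψu
      + (4*c^2*ψ*(starRingEnd ℂ ψ))*hI
  have G2 : d^2 = c^2 := by
    linear_combination ((-Complex.I)/4 * (starRingEnd ℂ φ) * ψ) * e01
      + ((d^2-c^2)*φ*(starRingEnd ℂ φ)*ψ*(starRingEnd ℂ ψ)) * hI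
      - (d^2-c^2)*ψ*(starRingEnd ℂ ψ)*hφu - (d^2-c^2)*hψu
  have hc0 : c ≠ 0 := by
    rw [hc]
    exact div_ne_zero (by exact_mod_cast ha.ne') (by
      exact_mod_cast (Real.sqrt_pos.mpr (by norm_num : (0:ℝ) < 2)).ne')
  have hd0 : d ≠ 0 := by
    rw [hd]
    exact div_ne_zero (by exact_mod_cast hb.ne') (by
      exact_mod_cast (Real.sqrt_pos.mpr (by norm_num : (0:ℝ) < 2)).ne')
  have Gφ : φ ^ 2 + (starRingEnd ℂ φ) ^ 2 = 0 := by
    have G3 : (4*c*d) * (φ^2 + (starRingEnd ℂ φ)^2) = 0 := by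
      linear_combination f00 - G1 - (4*c^2+4*d^2)*hφu
    rcases mul_eq_zero.mp G3 with h | h
    · exact absurd h (by simp [hc0, hd0])
    · exact h
  have Gψ : ψ ^ 2 + (starRingEnd ℂ ψ) ^ 2 = 0 := by
    have G3 : (4*c*d) * (ψ^2 + (starRingEnd ℂ ψ)^2) = 0 := by
      linear_combination g00 - G1 - (4*c^2+4*d^2)*hψu
        + ((4*c^2+4*d^2)*ψ*(starRingEnd ℂ ψ) + 4*c*d*(ψ^2 + (starRingEnd ℂ ψ)^2))*hI
    rcases mul_eq_zero.mp G3 with h | h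
    · exact absurd h (by simp [hc0, hd0])
    · exact h
  rw [hc, hd] at G1 G2
  have hs2 : (Real.sqrt 2)^2 = 2 := Real.sq_sqrt (by norm_num)
  have r1 : 4*(b/Real.sqrt 2)^2 + 4*(a/Real.sqrt 2)^2 = 1 := by exact_mod_cast G1
  have r2 : (b/Real.sqrt 2)^2 = (a/Real.sqrt 2)^2 := by exact_mod_cast G2
  rw [div_pow, div_pow, hs2] at r1 r2
  have hab : a = b := le_antisymm (by nlinarith) (by nlinarith)
  have ha2 : a = 1/2 := le_antisymm (by nlinarith) (by nlinarith)
  exact ⟨ha2, by rw [← hab]; exact ha2, Gφ, Gψ⟩
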